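/- Let q be a prime power, ℓ ≤ m be positive integers, and 1 ≤ t ≤ ℓ. The function on Mat_{ℓ×m}(F_q) assigning to each F the number of matrices M ∈ Mat_{ℓ×m}(F_q) with rank(M) ≤ t and trace(Fᵀ M) ≠ 0 takes at most ℓ + 1 distinct values; that is, the determinantal code C(t;ℓ,m) has at most ℓ + 1 distinct weights. -/

import Mathlib

open Matrix

noncomputable section

/-- Standard rank-`r` matrix. -/
def stdMat (K : Type*) [Field K] (ℓ m r : ℕ) : Matrix (Fin ℓ) (Fin m) K :=
  Matrix.of fun i j => if ((i : ℕ) = (j : ℕ) ∧ (j : ℕ) < r) then 1 else 0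

variable {K : Type*} [Field K] {ℓ m : ℕ}

set_option maxHeartbeats 1000000 in
/-- Any matrix is equivalent to the standard matrix of its rank. -/
lemma exists_units_std (F : Matrix (Fin ℓ) (Fin m) K) :
    ∃ (A : Matrix (Fin ℓ) (Fin ℓ) K) (B : Matrix (Fin m) (Fin m) K),
      IsUnit A.det ∧ IsUnit B.det ∧ F = A * stdMat K ℓ m F.rank * B := by
  classical
  set f := F.mulVecLin with hf
  set r := F.rank with hrdef
  have hr_range : Module.finrank K (LinearMap.range f) = r := rfl
  -- complements
  obtain ⟨C, hC⟩ := Submodule.exists_isCompl (LinearMap.ker f)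
  obtain ⟨D, hD⟩ := Submodule.exists_isCompl (LinearMap.range f)
  have hrm : r + Module.finrank K (LinearMap.ker f) = m := by
    have := LinearMap.finrank_range_add_finrank_ker f
    simpa [hr_range] using this
  have hKerC : Module.finrank K (LinearMap.ker f) + Module.finrank K C = m := by
    simpa using Submodule.finrank_add_eq_of_isCompl hC
  have hRD : r + Module.finrank K D = ℓ := by
    have := Submodule.finrank_add_eq_of_isCompl hD
    simpa [hr_range] using this
  have hD' : Module.finrank K D = ℓ - r := by omega
  have hker' : Module.finrank K (LinearMap.ker f) = m - r := by omega
  have hrℓ : r ≤ ℓ := by omega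
  have hrm' : r ≤ m := by omega
  -- bases
  let bR : Module.Basis (Fin r) K (LinearMap.range f) := Module.finBasisOfFinrankEq K _ hr_range
  let bD : Module.Basis (Fin (ℓ - r)) K D := Module.finBasisOfFinrankEq K _ hD'
  let bK : Module.Basis (Fin (m - r)) K (LinearMap.ker f) := Module.finBasisOfFinrankEq K _ hker'
  -- equivalence C ≃ range f acting as f
  let eC : C ≃ₗ[K] LinearMap.range f :=
    ((Submodule.quotientEquivOfIsCompl (LinearMap.ker f) C hC).symm).trans f.quotKerEquivRange
  have heC : ∀ c : C, (eC c : Fin ℓ → K) = f c := by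
    intro c; rfl
  let bC : Module.Basis (Fin r) K C := bR.map eC.symm
  -- bases of the full spaces
  let eℓ : Fin r ⊕ Fin (ℓ - r) ≃ Fin ℓ := finSumFinEquiv.trans (finCongr (by omega))
  let em : Fin r ⊕ Fin (m - r) ≃ Fin m := finSumFinEquiv.trans (finCongr (by omega))
  let w : Module.Basis (Fin ℓ) K (Fin ℓ → K) :=
    ((bR.prod bD).map (Submodule.prodEquivOfIsCompl _ _ hD)).reindex eℓ
  let v : Module.Basis (Fin m) K (Fin m → K) :=
    ((bC.prod bK).map (Submodule.prodEquivOfIsCompl C (LinearMap.ker f) hC.symm)).reindex em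
  have hw : ∀ i : Fin r, w (eℓ (Sum.inl i)) = (bR i : Fin ℓ → K) := by
    intro i
    simp [w, Module.Basis.reindex_apply, Module.Basis.prod_apply, Submodule.coe_prodEquivOfIsCompl]
  have hv1 : ∀ i : Fin r, v (em (Sum.inl i)) = (bC i : Fin m → K) := by
    intro i
    simp [v, Module.Basis.reindex_apply, Module.Basis.prod_apply, Submodule.coe_prodEquivOfIsCompl]
  have hv2 : ∀ i : Fin (m - r), v (em (Sum.inr i)) = (bK i : Fin m → K) := by
    intro i
    simp [v, Module.Basis.reindex_apply, Module.Basis.prod_apply, Submodule.coe_prodEquivOfIsCompl]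
  -- values of eℓ, em
  have heℓ1 : ∀ i : Fin r, ((eℓ (Sum.inl i) : Fin ℓ) : ℕ) = (i : ℕ) := by
    intro i; simp [eℓ]
  have heℓ2 : ∀ i : Fin (ℓ - r), ((eℓ (Sum.inr i) : Fin ℓ) : ℕ) = r + (i : ℕ) := by
    intro i; simp [eℓ]
  have hem1 : ∀ i : Fin r, ((em (Sum.inl i) : Fin m) : ℕ) = (i : ℕ) := by
    intro i; simp [em]
  have hem2 : ∀ i : Fin (m - r), ((em (Sum.inr i) : Fin m) : ℕ) = r + (i : ℕ) := by
    intro i; simp [em]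
  -- the matrix of f in bases v, w is the standard one
  have hmat : LinearMap.toMatrix v w f = stdMat K ℓ m r := by
    ext i j
    rw [LinearMap.toMatrix_apply]
    obtain ⟨sj, rfl⟩ := em.surjective j
    obtain ⟨si, rfl⟩ := eℓ.surjective i
    cases sj with
    | inl a =>
        rw [hv1 a]
        have hfv : f (bC a : Fin m → K) = (bR a : Fin ℓ → K) := by
          rw [← heC]; simp [bC]
        rw [hfv, ← hw a, Module.Basis.repr_self, Finsupp.single_apply]
        cases si with
        | inl b =>
            rw [stdMat]
            simp only [Matrix.of_apply, heℓ1, hem1]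
            by_cases hba : (b : ℕ) = (a : ℕ)
            · rw [if_pos, if_pos ⟨hba, a.isLt⟩]
              congr 1
              exact congrArg Sum.inl (Fin.ext hba.symm)
            · rw [if_neg, if_neg]
              · rintro ⟨h1, h2⟩; exact hba h1
              · intro h
                apply hba
                have := eℓ.injective h
                have := Sum.inl.inj this
                exact congrArg Fin.val this.symm
        | inr b =>
            rw [stdMat]
            simp only [Matrix.of_apply, heℓ2, hem1]
            rw [if_neg, if_neg]
            · rintro ⟨h1, h2⟩; omega
            · intro h
              exact Sum.inl_ne_inr (eℓ.injective h)
    | inr a =>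
        rw [hv2 a]
        have hk : f (bK a : Fin m → K) = 0 := (bK a).2
        rw [hk, map_zero]
        rw [stdMat]
        simp only [Matrix.of_apply, hem2]
        rw [if_neg]
        · simp
        · rintro ⟨h1, h2⟩; omega
  -- assemble
  let bℓ := Pi.basisFun K (Fin ℓ)
  let bm := Pi.basisFun K (Fin m)
  have hF : LinearMap.toMatrix bm bℓ f = F := by
    ext i j
    rw [LinearMap.toMatrix_apply, hf, ← Matrix.toLin'_apply', Matrix.toLin'_apply]
    simp [Matrix.mulVec_single, bℓ, bm]
  have key := basis_toMatrix_mul_linearMap_toMatrix_mul_basis_toMatrix bm v bℓ w f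
  refine ⟨bℓ.toMatrix w, v.toMatrix bm, ?_, ?_, ?_⟩
  · have : Invertible (bℓ.toMatrix w) := bℓ.invertibleToMatrix w
    exact Matrix.isUnit_det_of_invertible _
  · have : Invertible (v.toMatrix bm) := v.invertibleToMatrix bm
    exact Matrix.isUnit_det_of_invertible _
  · rw [← hF, ← key, hmat]

lemma count_eq (t : ℕ) (F : Matrix (Fin ℓ) (Fin m) K) (A : Matrix (Fin ℓ) (Fin ℓ) K)
    (B : Matrix (Fin m) (Fin m) K) (hA : IsUnit A.det) (hB : IsUnit B.det) :
    Nat.card {M : Matrix (Fin ℓ) (Fin m) K // M.rank ≤ t ∧ Matrix.trace ((A * F * B)ᵀ * M) ≠ 0}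
      = Nat.card {M : Matrix (Fin ℓ) (Fin m) K // M.rank ≤ t ∧ Matrix.trace (Fᵀ * M) ≠ 0} := by
  classical
  have hAT : IsUnit Aᵀ.det := by rwa [Matrix.det_transpose]
  have hBT : IsUnit Bᵀ.det := by rwa [Matrix.det_transpose]
  have hrk : ∀ M : Matrix (Fin ℓ) (Fin m) K, (Aᵀ * M * Bᵀ).rank = M.rank := by
    intro M
    rw [Matrix.rank_mul_eq_left_of_isUnit_det Bᵀ _ hBT,
      Matrix.rank_mul_eq_right_of_isUnit_det Aᵀ M hAT]
  have htr : ∀ M : Matrix (Fin ℓ) (Fin m) K,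
      Matrix.trace ((A * F * B)ᵀ * M) = Matrix.trace (Fᵀ * (Aᵀ * M * Bᵀ)) := by
    intro M
    rw [Matrix.transpose_mul, Matrix.transpose_mul]
    rw [show Bᵀ * (Fᵀ * Aᵀ) * M = Bᵀ * (Fᵀ * (Aᵀ * M)) by simp only [Matrix.mul_assoc]]
    rw [Matrix.trace_mul_comm]
    simp only [Matrix.mul_assoc]
  apply Nat.card_congr
  refine ⟨fun M => ⟨Aᵀ * M.1 * Bᵀ, by rw [hrk]; exact M.2.1, by rw [← htr]; exact M.2.2⟩,
    fun N => ⟨Aᵀ⁻¹ * N.1 * Bᵀ⁻¹, ?_, ?_⟩, ?_, ?_⟩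
  · rw [Matrix.rank_mul_eq_left_of_isUnit_det Bᵀ⁻¹ _ (Matrix.isUnit_nonsing_inv_det _ hBT),
      Matrix.rank_mul_eq_right_of_isUnit_det Aᵀ⁻¹ _ (Matrix.isUnit_nonsing_inv_det _ hAT)]
    exact N.2.1
  · have : Aᵀ * (Aᵀ⁻¹ * N.1 * Bᵀ⁻¹) * Bᵀ = N.1 := by
      rw [show Aᵀ * (Aᵀ⁻¹ * N.1 * Bᵀ⁻¹) * Bᵀ = Aᵀ * (Aᵀ⁻¹ * N.1) * (Bᵀ⁻¹ * Bᵀ) by simp only [Matrix.mul_assoc],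
        Matrix.nonsing_inv_mul _ hBT, Matrix.mul_nonsing_inv_cancel_left _ _ hAT, Matrix.mul_one]
    rw [htr, this]
    exact N.2.2
  · rintro ⟨M, hM⟩
    apply Subtype.ext
    simp only
    rw [show Aᵀ⁻¹ * (Aᵀ * M * Bᵀ) * Bᵀ⁻¹ = Aᵀ⁻¹ * (Aᵀ * M) * (Bᵀ * Bᵀ⁻¹) by simp only [Matrix.mul_assoc],
      Matrix.mul_nonsing_inv _ hBT, Matrix.nonsing_inv_mul_cancel_left _ _ hAT, Matrix.mul_one]
  · rintro ⟨N, hN⟩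
    apply Subtype.ext
    simp only
    rw [show Aᵀ * (Aᵀ⁻¹ * N * Bᵀ⁻¹) * Bᵀ = Aᵀ * (Aᵀ⁻¹ * N) * (Bᵀ⁻¹ * Bᵀ) by simp only [Matrix.mul_assoc],
      Matrix.nonsing_inv_mul _ hBT, Matrix.mul_nonsing_inv_cancel_left _ _ hAT, Matrix.mul_one]

end

/-- The determinantal code `C(t; ℓ, m)` has at most `ℓ + 1` distinct weights: the function
assigning to each coefficient matrix `F` the number of matrices `M` of rank at most `t` with
`trace (Fᵀ * M) ≠ 0` takes at most `ℓ + 1` distinct values. -/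
theorem det_code_few_weights (K : Type*) [Field K] [Fintype K] (q ℓ m t : ℕ)
    (hq : Fintype.card K = q) (hℓ : 0 < ℓ) (hℓm : ℓ ≤ m) (ht1 : 1 ≤ t) (htℓ : t ≤ ℓ) :
    (Set.range (fun F : Matrix (Fin ℓ) (Fin m) K =>
      Nat.card {M : Matrix (Fin ℓ) (Fin m) K // M.rank ≤ t ∧ Matrix.trace (Fᵀ * M) ≠ 0})).ncard
      ≤ ℓ + 1 := by
  classical
  have hsub : Set.range (fun F : Matrix (Fin ℓ) (Fin m) K =>
      Nat.card {M : Matrix (Fin ℓ) (Fin m) K // M.rank ≤ t ∧ Matrix.trace (Fᵀ * M) ≠ 0})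
      ⊆ (fun r => Nat.card {M : Matrix (Fin ℓ) (Fin m) K //
          M.rank ≤ t ∧ Matrix.trace ((stdMat K ℓ m r)ᵀ * M) ≠ 0}) '' (Set.Iic ℓ) := by
    rintro x ⟨F, rfl⟩
    obtain ⟨A, B, hA, hB, hFeq⟩ := exists_units_std F
    refine ⟨F.rank, by simpa using F.rank_le_card_height, ?_⟩
    dsimp only
    rw [← count_eq t (stdMat K ℓ m F.rank) A B hA hB, ← hFeq]
  calc (Set.range (fun F : Matrix (Fin ℓ) (Fin m) K =>
      Nat.card {M : Matrix (Fin ℓ) (Fin m) K // M.rank ≤ t ∧ Matrix.trace (Fᵀ * M) ≠ 0})).ncard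
      ≤ ((fun r => Nat.card {M : Matrix (Fin ℓ) (Fin m) K //
          M.rank ≤ t ∧ Matrix.trace ((stdMat K ℓ m r)ᵀ * M) ≠ 0}) '' (Set.Iic ℓ)).ncard :=
        Set.ncard_le_ncard hsub ((Set.finite_Iic ℓ).image _)
    _ ≤ (Set.Iic ℓ).ncard := Set.ncard_image_le (Set.finite_Iic ℓ)
    _ = ℓ + 1 := by rw [← Finset.coe_Iic, Set.ncard_coe_finset, Nat.card_Iic]
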